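/- Let m ≡ 0 (mod 4) with m ≥ 8, n = 2^m − 1, let h be an integer with 0 < h ≤ (m−4)/2, and a = 2^{(m+2)/2} − 1. Then: (i) if h is odd, then for every integer k with 1 ≤ k ≤ 2^{(m−2)/2} or with 2^m − 2^{(m−2)/2} − 1 ≤ k ≤ 2^m − 2, the residue a·k mod n lies in D_{(1,m)}; (ii) if h is even, then for every integer k with 1 ≤ k ≤ 2^{(m−2)/2} + 2 or with 2^m − 2^{(m−2)/2} − 1 ≤ k ≤ 2^m − 2, the residue a·k mod n lies in D_{(1,m)}. -/

import Mathlib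

open Polynomial

noncomputable def wt2 (a : ℕ) : ℕ := (Nat.digits 2 a).sum

noncomputable def ell (m i : ℕ) : ℕ :=
  sInf {l : ℕ | 0 < l ∧ i * 2 ^ l % (2 ^ m - 1) = i % (2 ^ m - 1)}

noncomputable def coset (m i : ℕ) : Finset ℕ :=
  (Finset.range (ell m i)).image (fun j => i * 2 ^ j % (2 ^ m - 1))

noncomputable def rho (m i : ℕ) : ℕ := ((coset m i).filter (fun x => x % 2 = 0)).card

noncomputable def vv (m i : ℕ) : ℕ := m * rho m i / ell m i % 2

noncomputable def Tset (m j : ℕ) : Finset ℕ :=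
  (Finset.range (2 ^ m - 1)).filter (fun i => vv m i = j)

noncomputable def Nset (m j : ℕ) : Finset ℕ :=
  (Finset.range (2 ^ m - 1)).filter (fun a => a ≠ 0 ∧ wt2 a % 2 = j)

noncomputable def epsilon (h a : ℕ) : ℕ :=
  if a = 2 ^ h - 1 then 1 else sInf {t : ℕ | 2 ^ h - 1 ≤ 2 ^ t * a}

noncomputable def kappa (h a : ℕ) : ℕ := epsilon h a % 2

noncomputable def leader (m i : ℕ) : ℕ := sInf {x : ℕ | x ∈ coset m i}

noncomputable def uu (m h i : ℕ) : ℕ :=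
  if leader m i = 1 then (vv m 1 + h + 1) % 2
  else if leader m i % 2 = 1 ∧ leader m i ≤ 2 ^ h - 1 then
    (kappa h (leader m i) + vv m (leader m i)) % 2
  else vv m (leader m i)

noncomputable def Dset (m h j : ℕ) : Finset ℕ :=
  (Finset.range (2 ^ m - 1)).filter (fun i => uu m h i = j)

noncomputable def cyclicCode (m : ℕ) (α : GaloisField 2 m) (T : Set ℕ) :
    Submodule (ZMod 2) (Polynomial (ZMod 2)) :=
  Polynomial.degreeLT (ZMod 2) (2 ^ m - 1) ⊓
    ⨅ j ∈ T, LinearMap.ker (Polynomial.aeval (α ^ j)).toLinearMap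

def minDistGE (C : Submodule (ZMod 2) (Polynomial (ZMod 2))) (d : ℕ) : Prop :=
  ∀ c ∈ C, c ≠ 0 → d ≤ c.support.card

section Wt2Lemmas

lemma wt2_zero : wt2 0 = 0 := by simp [wt2]

lemma wt2_rec (x : ℕ) (hx : x ≠ 0) : wt2 x = x % 2 + wt2 (x / 2) := by
  unfold wt2
  rw [Nat.digits_def' (by norm_num) (Nat.pos_of_ne_zero hx)]
  simp

lemma wt2_bit (x b : ℕ) (hb : b < 2) : wt2 (2 * x + b) = wt2 x + b := by
  rcases Nat.eq_zero_or_pos (2 * x + b) with h | h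
  · have hx : x = 0 := by omega
    have hb0 : b = 0 := by omega
    simp [hx, hb0, wt2_zero]
  · rw [wt2_rec _ (by omega)]
    have h1 : (2 * x + b) % 2 = b := by omega
    have h2 : (2 * x + b) / 2 = x := by omega
    rw [h1, h2]; ring

lemma wt2_one : wt2 1 = 1 := by
  have := wt2_bit 0 1 (by norm_num); simpa [wt2_zero] using this

lemma wt2_three : wt2 3 = 2 := by
  have := wt2_bit 1 1 (by norm_num); simp [wt2_one] at this; omega

lemma wt2_le_of_lt_pow (x b : ℕ) (h : x < 2 ^ b) : wt2 x ≤ b := by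
  induction b generalizing x with
  | zero => interval_cases x; simp [wt2_zero]
  | succ b ih =>
    have hx : x = 2 * (x / 2) + x % 2 := by omega
    rw [hx, wt2_bit _ _ (by omega)]
    have : x / 2 < 2 ^ b := by
      rw [pow_succ] at h; omega
    have := ih _ this
    omega

lemma wt2_mul_pow_add (q s r : ℕ) (hr : r < 2 ^ s) :
    wt2 (q * 2 ^ s + r) = wt2 q + wt2 r := by
  induction s generalizing r with
  | zero => interval_cases r <;> simp [wt2_zero]
  | succ s ih =>
    have hx : q * 2 ^ (s + 1) + r = 2 * (q * 2 ^ s + r / 2) + r % 2 := by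
      have h2 : q * 2 ^ (s + 1) = 2 * (q * 2 ^ s) := by ring
      omega
    rw [hx, wt2_bit _ _ (by omega), ih _ (by rw [pow_succ] at hr; omega)]
    have hr2 : r = 2 * (r / 2) + r % 2 := by omega
    conv_rhs => rw [hr2, wt2_bit _ _ (by omega)]
    ring

lemma wt2_compl (s c : ℕ) (hc : c < 2 ^ s) :
    wt2 c + wt2 (2 ^ s - 1 - c) = s := by
  induction s generalizing c with
  | zero => interval_cases c; simp [wt2_zero]
  | succ s ih =>
    have h2s : 0 < 2 ^ s := Nat.pow_pos (by norm_num)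
    have hc' : c / 2 < 2 ^ s := by rw [pow_succ] at hc; omega
    have hd : 2 ^ (s + 1) - 1 - c = 2 * (2 ^ s - 1 - c / 2) + (1 - c % 2) := by
      rw [pow_succ]; omega
    have hl : wt2 c = wt2 (c / 2) + c % 2 := by
      conv_lhs => rw [show c = 2 * (c / 2) + c % 2 from by omega]
      exact wt2_bit _ _ (by omega)
    rw [hd, wt2_bit _ _ (by omega), hl]
    have := ih _ hc'
    omega

lemma wt2_pow_sub_one (s : ℕ) : wt2 (2 ^ s - 1) = s := by
  have := wt2_compl s 0 (Nat.pow_pos (by norm_num))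
  simpa [wt2_zero] using this

lemma wt2_rep (s k : ℕ) (hk1 : 1 ≤ k) (hk2 : k ≤ 2 ^ s) :
    wt2 ((2 ^ s - 1) * k) = s := by
  have h1 : (2 ^ s - 1) * k = (k - 1) * 2 ^ s + (2 ^ s - 1 - (k - 1)) := by
    have h2s : 1 ≤ 2 ^ s := Nat.one_le_two_pow
    have hb1 : 2 ^ s ≤ k * 2 ^ s := Nat.le_mul_of_pos_left _ (by omega)
    have hb2 : k ≤ k * 2 ^ s := Nat.le_mul_of_pos_right _ (by positivity)
    rw [Nat.sub_mul, Nat.sub_mul, one_mul, one_mul, mul_comm (2 ^ s) k]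
    omega
  rw [h1, wt2_mul_pow_add _ _ _ (by have : 1 ≤ 2 ^ s := Nat.one_le_two_pow; omega)]
  have := wt2_compl s (k - 1) (by omega)
  omega

lemma wt2_eq_sum (b x : ℕ) (h : x < 2 ^ b) :
    wt2 x = ∑ i ∈ Finset.range b, (x / 2 ^ i % 2) := by
  induction b generalizing x with
  | zero => interval_cases x; simp [wt2_zero]
  | succ b ih =>
    rw [Finset.sum_range_succ']
    have h2 : x / 2 < 2 ^ b := by rw [pow_succ] at h; omega
    have hl : wt2 x = wt2 (x / 2) + x % 2 := by
      conv_lhs => rw [show x = 2 * (x / 2) + x % 2 from by omega]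
      exact wt2_bit _ _ (by omega)
    rw [hl, ih _ h2]
    congr 1
    · apply Finset.sum_congr rfl
      intro i _
      rw [pow_succ', ← Nat.div_div_eq_div_mul]
    · simp

lemma wt2_two : wt2 2 = 1 := by
  have := wt2_bit 1 0 (by norm_num)
  simpa [wt2_one] using this

end Wt2Lemmas

section Machinery

variable (m x : ℕ)

lemma npos (hm : 2 ≤ m) : 3 ≤ 2 ^ m - 1 := by
  have : 2 ^ 2 ≤ 2 ^ m := Nat.pow_le_pow_right (by norm_num) hm
  omega

lemma two_pow_mod (hm : 2 ≤ m) : 2 ^ m % (2 ^ m - 1) = 1 := by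
  have h := npos m hm
  rw [Nat.mod_eq_sub_mod (by omega), show 2 ^ m - (2 ^ m - 1) = 1 from by omega,
    Nat.mod_eq_of_lt (by omega)]

lemma f_shift (a b : ℕ) :
    x * 2 ^ (a + b) % (2 ^ m - 1) = (x * 2 ^ a % (2 ^ m - 1)) * 2 ^ b % (2 ^ m - 1) := by
  rw [pow_add, ← mul_assoc, Nat.mod_mul_mod]

lemma f_m (hm : 2 ≤ m) : x * 2 ^ m % (2 ^ m - 1) = x % (2 ^ m - 1) := by
  rw [Nat.mul_mod, two_pow_mod m hm, mul_one, Nat.mod_mod_of_dvd _ dvd_rfl]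

lemma f_m_add (hm : 2 ≤ m) (j : ℕ) :
    x * 2 ^ (j + m) % (2 ^ m - 1) = x * 2 ^ j % (2 ^ m - 1) := by
  rw [add_comm, f_shift, f_m m x hm, Nat.mod_mul_mod]

lemma m_mem_ell_set (hm : 2 ≤ m) : m ∈ {l : ℕ | 0 < l ∧ x * 2 ^ l % (2 ^ m - 1) = x % (2 ^ m - 1)} := by
  refine ⟨by omega, ?_⟩
  have := f_m_add m x hm 0
  simpa using this

lemma ell_mem (hm : 2 ≤ m) : 0 < ell m x ∧ x * 2 ^ ell m x % (2 ^ m - 1) = x % (2 ^ m - 1) :=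
  Nat.sInf_mem ⟨m, m_mem_ell_set m x hm⟩

lemma ell_pos (hm : 2 ≤ m) : 0 < ell m x := (ell_mem m x hm).1

lemma ell_le_m (hm : 2 ≤ m) : ell m x ≤ m := Nat.sInf_le (m_mem_ell_set m x hm)

lemma f_period (hm : 2 ≤ m) (j : ℕ) :
    x * 2 ^ (j + ell m x) % (2 ^ m - 1) = x * 2 ^ j % (2 ^ m - 1) := by
  rw [add_comm, f_shift, (ell_mem m x hm).2, Nat.mod_mul_mod]

lemma f_period_mul (hm : 2 ≤ m) (c j : ℕ) :
    x * 2 ^ (j + ell m x * c) % (2 ^ m - 1) = x * 2 ^ j % (2 ^ m - 1) := by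
  induction c generalizing j with
  | zero => simp
  | succ c ih =>
    have h : j + ell m x * (c + 1) = (j + ell m x) + ell m x * c := by ring
    rw [h, ih (j + ell m x), f_period m x hm]

lemma f_mod_ell (hm : 2 ≤ m) (j : ℕ) :
    x * 2 ^ j % (2 ^ m - 1) = x * 2 ^ (j % ell m x) % (2 ^ m - 1) := by
  conv_lhs => rw [show j = j % ell m x + ell m x * (j / ell m x) from by
    rw [Nat.mod_add_div]]
  rw [f_period_mul m x hm]

lemma mem_coset (hm : 2 ≤ m) (j : ℕ) : x * 2 ^ j % (2 ^ m - 1) ∈ coset m x := by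
  rw [f_mod_ell m x hm]
  exact Finset.mem_image.mpr ⟨j % ell m x,
    Finset.mem_range.mpr (Nat.mod_lt _ (ell_pos m x hm)), rfl⟩

lemma x_mem_coset (hm : 2 ≤ m) (hxn : x < 2 ^ m - 1) : x ∈ coset m x := by
  have := mem_coset m x hm 0
  rwa [pow_zero, mul_one, Nat.mod_eq_of_lt hxn] at this

lemma coset_bounds (hm : 2 ≤ m) (hx0 : 0 < x) (hxn : x < 2 ^ m - 1) : ∀ y ∈ coset m x, 0 < y ∧ y < 2 ^ m - 1 := by
  intro y hy
  obtain ⟨j, -, rfl⟩ := Finset.mem_image.mp hy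
  have hN := npos m hm
  constructor
  · rcases Nat.eq_zero_or_pos (x * 2 ^ j % (2 ^ m - 1)) with h | h
    · exfalso
      have hdvd : (2 ^ m - 1) ∣ x * 2 ^ j := Nat.dvd_of_mod_eq_zero h
      have hodd : Odd (2 ^ m - 1) := by
        have : 2 ^ m % 2 = 0 := by
          have : (2:ℕ) ^ m = 2 * 2 ^ (m - 1) := by
            rw [← pow_succ']; congr 1; omega
          omega
        refine Nat.odd_iff.mpr (by omega)
      have hcop : Nat.Coprime (2 ^ m - 1) (2 ^ j) :=
        Nat.Coprime.pow_right _ (Nat.coprime_two_right.mpr hodd)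
      have := hcop.dvd_of_dvd_mul_right hdvd
      have := Nat.le_of_dvd hx0 this
      omega
    · exact h
  · exact Nat.mod_lt _ (by omega)

lemma ell_dvd (hm : 2 ≤ m) : ell m x ∣ m := by
  rcases Nat.eq_zero_or_pos (m % ell m x) with h | h
  · exact Nat.dvd_of_mod_eq_zero h
  · exfalso
    have h1 : x * 2 ^ (m % ell m x) % (2 ^ m - 1) = x % (2 ^ m - 1) := by
      rw [← f_mod_ell m x hm]
      exact (m_mem_ell_set m x hm).2
    have h2 : ell m x ≤ m % ell m x := Nat.sInf_le ⟨h, h1⟩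
    have h3 : m % ell m x < ell m x := Nat.mod_lt _ (ell_pos m x hm)
    omega

lemma f_injOn (hm : 2 ≤ m) : Set.InjOn (fun j => x * 2 ^ j % (2 ^ m - 1)) (Finset.range (ell m x)) := by
  have key : ∀ a b : ℕ, a < b → b < ell m x →
      x * 2 ^ a % (2 ^ m - 1) = x * 2 ^ b % (2 ^ m - 1) → False := by
    intro a b hab hb heq
    have hbm : b ≤ m := le_trans (le_of_lt hb) (ell_le_m m x hm)
    have h1 : (x * 2 ^ a % (2 ^ m - 1)) * 2 ^ (m - a) % (2 ^ m - 1) = x % (2 ^ m - 1) := by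
      rw [← f_shift, show a + (m - a) = m from by omega, f_m m x hm]
    have h2 : (x * 2 ^ b % (2 ^ m - 1)) * 2 ^ (m - a) % (2 ^ m - 1)
        = x * 2 ^ (b - a) % (2 ^ m - 1) := by
      rw [← f_shift, show b + (m - a) = (b - a) + m from by omega, f_m_add m x hm]
    rw [heq, h2] at h1
    have h3 : ell m x ≤ b - a := Nat.sInf_le ⟨by omega, h1⟩
    omega
  intro a ha b hb heq
  simp only [Finset.coe_range, Set.mem_Iio] at ha hb
  rcases lt_trichotomy a b with h | h | h
  · exact absurd (key a b h hb heq) (by simp)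
  · exact h
  · exact absurd (key b a h ha heq.symm) (by simp)

lemma card_coset (hm : 2 ≤ m) : (coset m x).card = ell m x := by
  rw [coset, Finset.card_image_of_injOn (f_injOn m x hm), Finset.card_range]

lemma rotFormula (hm : 2 ≤ m) (hxn : x < 2 ^ m - 1) (j : ℕ) (hj : j ≤ m) :
    x * 2 ^ j % (2 ^ m - 1) = (x % 2 ^ (m - j)) * 2 ^ j + x / 2 ^ (m - j) := by
  set e := m - j with he
  set q := x / 2 ^ e with hq
  set r := x % 2 ^ e with hr
  have hqe : 2 ^ e * q + r = x := Nat.div_add_mod x (2 ^ e)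
  have hem : 2 ^ e * 2 ^ j = 2 ^ m := by rw [← pow_add]; congr 1; omega
  have hN := npos m hm
  have hrlt : r < 2 ^ e := Nat.mod_lt _ (Nat.pow_pos (by norm_num))
  have hqlt : q < 2 ^ j := by
    rw [hq, Nat.div_lt_iff_lt_mul (Nat.pow_pos (by norm_num))]
    calc x < 2 ^ m := by omega
    _ = 2 ^ j * 2 ^ e := by rw [← hem, mul_comm]
  have key1 : x * 2 ^ j = q * (2 ^ m - 1) + (q + r * 2 ^ j) := by
    have e1 : x * 2 ^ j = q * 2 ^ m + r * 2 ^ j := by rw [← hqe, ← hem]; ring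
    have e3 : q ≤ q * 2 ^ m := Nat.le_mul_of_pos_right _ (by positivity)
    have e2 : q * (2 ^ m - 1) = q * 2 ^ m - q := by rw [Nat.mul_sub, mul_one]
    omega
  have hb1 : r * 2 ^ j ≤ 2 ^ m - 2 ^ j := by
    have : r * 2 ^ j ≤ (2 ^ e - 1) * 2 ^ j := Nat.mul_le_mul_right _ (by omega)
    rw [Nat.sub_mul, one_mul, hem] at this
    exact this
  have hbound : q + r * 2 ^ j < 2 ^ m - 1 := by
    have h2j : 1 ≤ 2 ^ j := Nat.one_le_two_pow
    have hjm : 2 ^ j ≤ 2 ^ m := Nat.pow_le_pow_right (by norm_num) hj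
    have hejm : 2 ^ e ≤ 2 ^ m := Nat.pow_le_pow_right (by norm_num) (by omega)
    rcases Nat.lt_or_ge (q + r * 2 ^ j) (2 ^ m - 1) with h | h
    · exact h
    · exfalso
      have hq' : q = 2 ^ j - 1 := by omega
      have hr' : r * 2 ^ j = 2 ^ m - 2 ^ j := by omega
      have hr'' : r = 2 ^ e - 1 := by
        have h1 : r * 2 ^ j = (2 ^ e - 1) * 2 ^ j := by
          rw [Nat.sub_mul, one_mul, hem]; exact hr'
        exact Nat.eq_of_mul_eq_mul_right (by positivity) h1
      have : x = 2 ^ m - 1 := by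
        have h2e : 1 ≤ 2 ^ e := Nat.one_le_two_pow
        have h2j : 1 ≤ 2 ^ j := Nat.one_le_two_pow
        have e5 : 2 ^ e * (2 ^ j - 1) = 2 ^ m - 2 ^ e := by
          rw [Nat.mul_sub, mul_one, hem]
        rw [← hqe, hq', hr'']
        omega
      omega
  rw [key1]
  rw [add_comm (q * (2 ^ m - 1)), Nat.add_mul_mod_self_right, Nat.mod_eq_of_lt hbound]
  ring

lemma parity_bit (hm : 2 ≤ m) (hxn : x < 2 ^ m - 1) (j : ℕ) (hj1 : 1 ≤ j) (hj2 : j < m) :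
    x * 2 ^ j % (2 ^ m - 1) % 2 = x / 2 ^ (m - j) % 2 := by
  rw [rotFormula m x hm hxn j (by omega)]
  have : 2 ∣ (x % 2 ^ (m - j)) * 2 ^ j :=
    Dvd.dvd.mul_left (dvd_pow_self 2 (by omega)) _
  omega

lemma wt2_step (hm : 2 ≤ m) (y : ℕ) (h0 : 0 < y) (h1 : y < 2 ^ m - 1) :
    wt2 (2 * y % (2 ^ m - 1)) = wt2 y := by
  have hN := npos m hm
  have hm1 : (2:ℕ) ^ m = 2 * 2 ^ (m - 1) := by
    rw [← pow_succ']; congr 1; omega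
  rcases Nat.lt_or_ge (2 * y) (2 ^ m - 1) with h | h
  · rw [Nat.mod_eq_of_lt h]
    have := wt2_bit y 0 (by norm_num)
    simpa using this
  · have h2 : 2 * y % (2 ^ m - 1) = 2 * y - (2 ^ m - 1) := by
      rw [Nat.mod_eq_sub_mod h, Nat.mod_eq_of_lt (by omega)]
    have hy1 : 2 ^ (m - 1) ≤ y := by omega
    set r := y - 2 ^ (m - 1) with hr
    have hrlt : r < 2 ^ (m - 1) := by omega
    have h3 : 2 * y - (2 ^ m - 1) = 2 * r + 1 := by omega
    have h4 : wt2 y = 1 + wt2 r := by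
      have : y = 1 * 2 ^ (m - 1) + r := by omega
      rw [this, wt2_mul_pow_add _ _ _ hrlt, wt2_one]
    rw [h2, h3, wt2_bit r 1 (by norm_num), h4]
    omega

lemma wt2_f (hm : 2 ≤ m) (hx0 : 0 < x) (hxn : x < 2 ^ m - 1) (j : ℕ) :
    wt2 (x * 2 ^ j % (2 ^ m - 1)) = wt2 x := by
  induction j with
  | zero => rw [pow_zero, mul_one, Nat.mod_eq_of_lt hxn]
  | succ j ih =>
    have hmem := mem_coset m x hm j
    obtain ⟨hpos, hlt⟩ := coset_bounds m x hm hx0 hxn _ hmem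
    have he : x * 2 ^ (j + 1) % (2 ^ m - 1)
        = 2 * (x * 2 ^ j % (2 ^ m - 1)) % (2 ^ m - 1) := by
      conv_rhs => rw [Nat.mul_mod_mod]
      congr 1; ring
    rw [he, wt2_step m hm _ hpos hlt, ih]

lemma wt2_coset (hm : 2 ≤ m) (hx0 : 0 < x) (hxn : x < 2 ^ m - 1) :
    ∀ y ∈ coset m x, wt2 y = wt2 x := by
  intro y hy
  obtain ⟨j, -, rfl⟩ := Finset.mem_image.mp hy
  exact wt2_f m x hm hx0 hxn j

lemma sum_parity (hm : 2 ≤ m) (hx0 : 0 < x) (hxn : x < 2 ^ m - 1) :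
    ∑ j ∈ Finset.range m, (x * 2 ^ j % (2 ^ m - 1) % 2) = wt2 x := by
  rw [wt2_eq_sum m x (by have := npos m hm; omega)]
  refine Finset.sum_nbij' (fun j => if j = 0 then 0 else m - j)
    (fun j => if j = 0 then 0 else m - j) ?_ ?_ ?_ ?_ ?_
  · intro a ha
    simp only [Finset.mem_range] at ha ⊢
    split <;> omega
  · intro a ha
    simp only [Finset.mem_range] at ha ⊢
    split <;> omega
  · intro a ha
    simp only [Finset.mem_range] at ha
    beta_reduce
    rcases Nat.eq_zero_or_pos a with h | h
    · simp [h]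
    · rw [if_neg (show ¬ a = 0 from by omega),
        if_neg (show ¬ m - a = 0 from by omega)]; omega
  · intro a ha
    simp only [Finset.mem_range] at ha
    beta_reduce
    rcases Nat.eq_zero_or_pos a with h | h
    · simp [h]
    · rw [if_neg (show ¬ a = 0 from by omega),
        if_neg (show ¬ m - a = 0 from by omega)]; omega
  · intro a ha
    simp only [Finset.mem_range] at ha
    beta_reduce
    rcases Nat.eq_zero_or_pos a with h | h
    · subst h
      rw [if_pos rfl, pow_zero, mul_one, Nat.div_one, Nat.mod_eq_of_lt hxn]
    · rw [if_neg (by omega), parity_bit m x hm hxn a h ha]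

lemma count_evens (hm : 2 ≤ m) (hx0 : 0 < x) (hxn : x < 2 ^ m - 1) :
    ((Finset.range m).filter (fun j => x * 2 ^ j % (2 ^ m - 1) % 2 = 0)).card
      + wt2 x = m := by
  rw [Finset.card_filter, ← sum_parity m x hm hx0 hxn, ← Finset.sum_add_distrib]
  have : ∀ j ∈ Finset.range m,
      ((if x * 2 ^ j % (2 ^ m - 1) % 2 = 0 then 1 else 0)
        + x * 2 ^ j % (2 ^ m - 1) % 2) = 1 := by
    intro j _
    rcases Nat.mod_two_eq_zero_or_one (x * 2 ^ j % (2 ^ m - 1)) with h | h <;> simp [h]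
  rw [Finset.sum_congr rfl this]
  simp

lemma count_block (hm : 2 ≤ m) (c : ℕ) :
    ((Finset.range (ell m x * c)).filter
        (fun j => x * 2 ^ j % (2 ^ m - 1) % 2 = 0)).card
      = c * ((Finset.range (ell m x)).filter
        (fun j => x * 2 ^ j % (2 ^ m - 1) % 2 = 0)).card := by
  induction c with
  | zero => simp
  | succ c ih =>
    rw [Finset.card_filter, Finset.card_filter] at *
    rw [show ell m x * (c + 1) = ell m x * c + ell m x from by ring,
      Finset.sum_range_add, ih]
    have : ∀ j ∈ Finset.range (ell m x),
        (if x * 2 ^ (ell m x * c + j) % (2 ^ m - 1) % 2 = 0 then 1 else 0)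
          = (if x * 2 ^ j % (2 ^ m - 1) % 2 = 0 then (1:ℕ) else 0) := by
      intro j _
      have hp : x * 2 ^ (ell m x * c + j) % (2 ^ m - 1)
          = x * 2 ^ j % (2 ^ m - 1) := by
        rw [add_comm, f_period_mul m x hm]
      rw [hp]
    rw [Finset.sum_congr rfl this]
    ring

lemma rho_eq (hm : 2 ≤ m) :
    rho m x = ((Finset.range (ell m x)).filter
      (fun j => x * 2 ^ j % (2 ^ m - 1) % 2 = 0)).card := by
  rw [rho, coset, Finset.filter_image]
  refine Finset.card_image_of_injOn ((f_injOn m x hm).mono ?_)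
  intro a ha
  simp only [Finset.coe_filter, Set.mem_setOf_eq] at ha
  simp only [Finset.coe_range, Set.mem_Iio]
  exact Finset.mem_range.mp ha.1

lemma vv_eq (hm : 2 ≤ m) (hm2 : m % 2 = 0) (hx0 : 0 < x) (hxn : x < 2 ^ m - 1) :
    vv m x = wt2 x % 2 := by
  have hdvd := ell_dvd m x hm
  have hpos := ell_pos m x hm
  obtain ⟨c, hc⟩ := hdvd
  have hcount : c * rho m x + wt2 x = m := by
    rw [rho_eq m x hm, ← count_block m x hm c, ← hc]
    exact count_evens m x hm hx0 hxn
  have hdiv : m * rho m x / ell m x = c * rho m x := by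
    conv_lhs => rw [show m * rho m x = ell m x * (c * rho m x) from by
      rw [← mul_assoc, ← hc]]
    exact Nat.mul_div_cancel_left _ hpos
  show m * rho m x / ell m x % 2 = wt2 x % 2
  rw [hdiv]
  have hwm : wt2 x ≤ m := by omega
  omega

end Machinery


section Leader

variable (m x : ℕ)

lemma leader_mem (hm : 2 ≤ m) (hxn : x < 2 ^ m - 1) : leader m x ∈ coset m x :=
  Nat.sInf_mem ⟨x, x_mem_coset m x hm hxn⟩

lemma leader_props (hm : 2 ≤ m) (hx0 : 0 < x) (hxn : x < 2 ^ m - 1) :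
    0 < leader m x ∧ leader m x < 2 ^ m - 1 ∧ wt2 (leader m x) = wt2 x := by
  have hmem := leader_mem m x hm hxn
  obtain ⟨h1, h2⟩ := coset_bounds m x hm hx0 hxn _ hmem
  exact ⟨h1, h2, wt2_coset m x hm hx0 hxn _ hmem⟩

lemma uu_generic (h : ℕ) (hm : 2 ≤ m) (hm2 : m % 2 = 0) (hx0 : 0 < x)
    (hxn : x < 2 ^ m - 1) (hw : wt2 x % 2 = 1) (hwh : h < wt2 x) (hh : 0 < h) :
    uu m h x = 1 := by
  obtain ⟨hl0, hln, hlw⟩ := leader_props m x hm hx0 hxn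
  have hne1 : leader m x ≠ 1 := by
    intro he
    rw [he, wt2_one] at hlw
    omega
  have hnsmall : ¬ (leader m x % 2 = 1 ∧ leader m x ≤ 2 ^ h - 1) := by
    rintro ⟨-, hle⟩
    have : wt2 (leader m x) ≤ h :=
      wt2_le_of_lt_pow _ h (by have : 1 ≤ 2 ^ h := Nat.one_le_two_pow; omega)
    omega
  rw [uu, if_neg hne1, if_neg hnsmall, vv_eq m _ hm hm2 hl0 hln, hlw, hw]

end Leader

lemma leader_three (m t : ℕ) (hm : 2 ≤ m) (ht : t ≤ m)
    (h3 : 3 * 2 ^ t < 2 ^ m - 1) : leader m (3 * 2 ^ t) = 3 := by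
  have hx0 : 0 < 3 * 2 ^ t := by positivity
  have hmem3 : (3 : ℕ) ∈ coset m (3 * 2 ^ t) := by
    have := mem_coset m (3 * 2 ^ t) hm (m - t)
    have he : 3 * 2 ^ t * 2 ^ (m - t) = 3 * 2 ^ m := by
      rw [mul_assoc, ← pow_add, show t + (m - t) = m from by omega]
    rw [he] at this
    have hmod : 3 * 2 ^ m % (2 ^ m - 1) = 3 := by
      rw [Nat.mul_mod, two_pow_mod m hm, mul_one, Nat.mod_mod_of_dvd _ dvd_rfl,
        Nat.mod_eq_of_lt (by omega)]
    rwa [hmod] at this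
  have hle : leader m (3 * 2 ^ t) ≤ 3 := Nat.sInf_le hmem3
  obtain ⟨hl0, hln, hlw⟩ := leader_props m (3 * 2 ^ t) hm hx0 h3
  have hw3 : wt2 (3 * 2 ^ t) = 2 := by
    have := wt2_mul_pow_add 3 t 0 (by positivity)
    simpa [wt2_zero, wt2_three] using this
  rw [hw3] at hlw
  interval_cases hL : leader m (3 * 2 ^ t)
  · rw [wt2_one] at hlw; omega
  · rw [wt2_two] at hlw; omega
  · rfl

lemma kappa_three (h : ℕ) (hh : 0 < h) (hhe : h % 2 = 0) : kappa h 3 = 1 := by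
  have hh2 : 2 ≤ h := by omega
  rcases Nat.eq_or_lt_of_le hh2 with he | hlt
  · rw [kappa, epsilon, if_pos (by rw [← he]; norm_num)]
  · have hh4 : 4 ≤ h := by omega
    have hpow : (2:ℕ) ^ h = 4 * 2 ^ (h - 2) := by
      rw [show h = 2 + (h - 2) from by omega, pow_add]; norm_num
    have hp2 : (2:ℕ) ≤ 2 ^ (h - 2) := by
      calc (2:ℕ) = 2 ^ 1 := by norm_num
      _ ≤ 2 ^ (h - 2) := Nat.pow_le_pow_right (by norm_num) (by omega)
    have hne : (3:ℕ) ≠ 2 ^ h - 1 := by omega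
    have heps : epsilon h 3 = h - 1 := by
      rw [epsilon, if_neg hne]
      have hmem : h - 1 ∈ {t : ℕ | 2 ^ h - 1 ≤ 2 ^ t * 3} := by
        have : (2:ℕ) ^ (h - 1) = 2 * 2 ^ (h - 2) := by
          rw [show h - 1 = 1 + (h - 2) from by omega, pow_add]; norm_num
        simp only [Set.mem_setOf_eq]
        omega
      have hlb : ∀ s ∈ {t : ℕ | 2 ^ h - 1 ≤ 2 ^ t * 3}, h - 1 ≤ s := by
        intro s hs
        simp only [Set.mem_setOf_eq] at hs
        by_contra hc
        have hsle : s ≤ h - 2 := by omega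
        have : (2:ℕ) ^ s ≤ 2 ^ (h - 2) := Nat.pow_le_pow_right (by norm_num) hsle
        omega
      have h1 : sInf {t : ℕ | 2 ^ h - 1 ≤ 2 ^ t * 3} ≤ h - 1 := Nat.sInf_le hmem
      have h2 := hlb _ (Nat.sInf_mem (⟨h - 1, hmem⟩ :
        Set.Nonempty {t : ℕ | 2 ^ h - 1 ≤ 2 ^ t * 3}))
      omega
    rw [kappa, heps]
    omega

lemma uu_special (m h t : ℕ) (hm : 2 ≤ m) (hm2 : m % 2 = 0) (ht : t ≤ m)
    (h3 : 3 * 2 ^ t < 2 ^ m - 1) (hh : 0 < h) (hhe : h % 2 = 0) :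
    uu m h (3 * 2 ^ t) = 1 := by
  have hL := leader_three m t hm ht h3
  have hN : 3 < 2 ^ m - 1 := by
    have : (1:ℕ) ≤ 2 ^ t := Nat.one_le_two_pow
    omega
  have hv3 : vv m 3 = 0 := by
    rw [vv_eq m 3 hm hm2 (by norm_num) hN, wt2_three]
  have h2h : (3:ℕ) ≤ 2 ^ h - 1 := by
    have : (4:ℕ) = 2 ^ 2 := by norm_num
    have h4 : (4:ℕ) ≤ 2 ^ h := by
      rw [this]; exact Nat.pow_le_pow_right (by norm_num) (by omega)
    omega
  rw [uu, hL, if_neg (by norm_num), if_pos ⟨by norm_num, h2h⟩,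
    kappa_three h hh hhe, hv3]

theorem stmt13 (m h : ℕ) (hm4 : m % 4 = 0) (hm : 8 ≤ m) (hh : 0 < h)
    (hh2 : h ≤ (m - 4) / 2) :
    (Odd h → ∀ k, (1 ≤ k ∧ k ≤ 2 ^ ((m - 2) / 2)) ∨
        (2 ^ m - 2 ^ ((m - 2) / 2) - 1 ≤ k ∧ k ≤ 2 ^ m - 2) →
      (2 ^ ((m + 2) / 2) - 1) * k % (2 ^ m - 1) ∈ Dset m h 1) ∧
    (Even h → ∀ k, (1 ≤ k ∧ k ≤ 2 ^ ((m - 2) / 2) + 2) ∨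
        (2 ^ m - 2 ^ ((m - 2) / 2) - 1 ≤ k ∧ k ≤ 2 ^ m - 2) →
      (2 ^ ((m + 2) / 2) - 1) * k % (2 ^ m - 1) ∈ Dset m h 1) := by
  obtain ⟨c, hc⟩ : 4 ∣ m := Nat.dvd_of_mod_eq_zero hm4
  have hc2 : 2 ≤ c := by omega
  have e1 : (m + 2) / 2 = 2 * c + 1 := by omega
  have e2 : (m - 2) / 2 = 2 * c - 1 := by omega
  have hh2' : h ≤ 2 * c - 2 := by
    have he3 : (m - 4) / 2 = 2 * c - 2 := by omega
    omega
  have hm2' : 2 ≤ m := by omega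
  have hm2 : m % 2 = 0 := by omega
  have hP8 : 8 ≤ 2 ^ (2 * c - 1) := by
    calc (8:ℕ) = 2 ^ 3 := by norm_num
    _ ≤ 2 ^ (2 * c - 1) := Nat.pow_le_pow_right (by norm_num) (by omega)
  have hA : 2 ^ (2 * c + 1) = 4 * 2 ^ (2 * c - 1) := by
    rw [show (4:ℕ) * 2 ^ (2 * c - 1) = 2 ^ 2 * 2 ^ (2 * c - 1) from by norm_num,
      ← pow_add]
    congr 1; omega
  have hM : 2 ^ m = 4 * (2 ^ (2 * c - 1) * 2 ^ (2 * c - 1)) := by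
    rw [show m = (2 + (2 * c - 1)) + (2 * c - 1) from by omega, pow_add, pow_add]
    ring
  have hPQ : 8 * 2 ^ (2 * c - 1) ≤ 2 ^ (2 * c - 1) * 2 ^ (2 * c - 1) :=
    Nat.mul_le_mul_right _ hP8
  have hN3 := npos m hm2'
  rw [e1, e2]
  have hkey_low : ∀ k, 1 ≤ k → k ≤ 2 ^ (2 * c - 1) →
      uu m h ((2 ^ (2 * c + 1) - 1) * k % (2 ^ m - 1)) = 1 := by
    intro k hk1 hk2
    have hxlt : (2 ^ (2 * c + 1) - 1) * k < 2 ^ m - 1 := by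
      have h1 : (2 ^ (2 * c + 1) - 1) * k ≤ (2 ^ (2 * c + 1) - 1) * 2 ^ (2 * c - 1) :=
        Nat.mul_le_mul_left _ hk2
      have h2 : (2 ^ (2 * c + 1) - 1) * 2 ^ (2 * c - 1)
          = 4 * (2 ^ (2 * c - 1) * 2 ^ (2 * c - 1)) - 2 ^ (2 * c - 1) := by
        rw [hA, Nat.sub_mul, one_mul, mul_assoc]
      omega
    rw [Nat.mod_eq_of_lt hxlt]
    have hw : wt2 ((2 ^ (2 * c + 1) - 1) * k) = 2 * c + 1 :=
      wt2_rep _ _ hk1 (by omega)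
    exact uu_generic m _ h hm2' hm2 (Nat.mul_pos (by omega) hk1) hxlt
      (by rw [hw]; omega) (by rw [hw]; omega) hh
  have hkey_high : ∀ k, 2 ^ m - 2 ^ (2 * c - 1) - 1 ≤ k → k ≤ 2 ^ m - 2 →
      uu m h ((2 ^ (2 * c + 1) - 1) * k % (2 ^ m - 1)) = 1 := by
    intro k hk1 hk2
    have hk'1 : 1 ≤ 2 ^ m - 1 - k := by omega
    have hk'2 : 2 ^ m - 1 - k ≤ 2 ^ (2 * c - 1) := by omega
    have hy : (2 ^ (2 * c + 1) - 1) * (2 ^ m - 1 - k)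
        ≤ 4 * (2 ^ (2 * c - 1) * 2 ^ (2 * c - 1)) - 2 ^ (2 * c - 1) := by
      have h1 : (2 ^ (2 * c + 1) - 1) * (2 ^ m - 1 - k)
          ≤ (2 ^ (2 * c + 1) - 1) * 2 ^ (2 * c - 1) := Nat.mul_le_mul_left _ hk'2
      have h2 : (2 ^ (2 * c + 1) - 1) * 2 ^ (2 * c - 1)
          = 4 * (2 ^ (2 * c - 1) * 2 ^ (2 * c - 1)) - 2 ^ (2 * c - 1) := by
        rw [hA, Nat.sub_mul, one_mul, mul_assoc]
      omega
    have hy0 : 0 < (2 ^ (2 * c + 1) - 1) * (2 ^ m - 1 - k) :=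
      Nat.mul_pos (by omega) hk'1
    have hsum : (2 ^ (2 * c + 1) - 1) * k + (2 ^ (2 * c + 1) - 1) * (2 ^ m - 1 - k)
        = (2 ^ (2 * c + 1) - 1) * (2 ^ m - 1) := by
      rw [← Nat.mul_add]; congr 1; omega
    have key : (2 ^ (2 * c + 1) - 1) * k
        = (2 ^ m - 1 - (2 ^ (2 * c + 1) - 1) * (2 ^ m - 1 - k))
          + (2 ^ (2 * c + 1) - 1 - 1) * (2 ^ m - 1) := by
      have h3 : (2 ^ (2 * c + 1) - 1 - 1) * (2 ^ m - 1)
          = (2 ^ (2 * c + 1) - 1) * (2 ^ m - 1) - (2 ^ m - 1) := by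
        rw [Nat.sub_mul, one_mul]
      have h4 : 2 ^ m - 1 ≤ (2 ^ (2 * c + 1) - 1) * (2 ^ m - 1) :=
        Nat.le_mul_of_pos_left _ (by omega)
      omega
    rw [key, Nat.add_mul_mod_self_right, Nat.mod_eq_of_lt (by omega)]
    have hwy : wt2 ((2 ^ (2 * c + 1) - 1) * (2 ^ m - 1 - k)) = 2 * c + 1 :=
      wt2_rep _ _ hk'1 (by omega)
    have hcompl := wt2_compl m ((2 ^ (2 * c + 1) - 1) * (2 ^ m - 1 - k)) (by omega)
    exact uu_generic m _ h hm2' hm2 (by omega) (by omega)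
      (by omega) (by omega) hh
  have memD : ∀ y : ℕ, y < 2 ^ m - 1 → uu m h y = 1 → y ∈ Dset m h 1 := by
    intro y hylt hy
    rw [Dset, Finset.mem_filter]
    exact ⟨Finset.mem_range.mpr hylt, hy⟩
  constructor
  · rintro - k (⟨hk1, hk2⟩ | ⟨hk1, hk2⟩)
    · exact memD _ (Nat.mod_lt _ (by omega)) (hkey_low k hk1 hk2)
    · exact memD _ (Nat.mod_lt _ (by omega)) (hkey_high k hk1 hk2)
  · intro heven k hk
    have hhe : h % 2 = 0 := Nat.even_iff.mp heven
    rcases hk with ⟨hk1, hk2⟩ | ⟨hk1, hk2⟩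
    · rcases (show k ≤ 2 ^ (2 * c - 1) ∨ k = 2 ^ (2 * c - 1) + 1
          ∨ k = 2 ^ (2 * c - 1) + 2 from by omega) with hk | hk | hk
      · exact memD _ (Nat.mod_lt _ (by omega)) (hkey_low k hk1 hk)
      · subst hk
        have key : (2 ^ (2 * c + 1) - 1) * (2 ^ (2 * c - 1) + 1)
            = 3 * 2 ^ (2 * c - 1) + 1 * (2 ^ m - 1) := by
          have e1' : (2 ^ (2 * c + 1) - 1) * (2 ^ (2 * c - 1) + 1)
              = 2 ^ (2 * c + 1) * (2 ^ (2 * c - 1) + 1) - (2 ^ (2 * c - 1) + 1) := by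
            rw [Nat.sub_mul, one_mul]
          have e2' : 2 ^ (2 * c + 1) * (2 ^ (2 * c - 1) + 1)
              = 4 * (2 ^ (2 * c - 1) * 2 ^ (2 * c - 1)) + 4 * 2 ^ (2 * c - 1) := by
            rw [hA]; ring
          omega
        have hx : (2 ^ (2 * c + 1) - 1) * (2 ^ (2 * c - 1) + 1) % (2 ^ m - 1)
            = 3 * 2 ^ (2 * c - 1) := by
          rw [key, Nat.add_mul_mod_self_right, Nat.mod_eq_of_lt (by omega)]
        rw [hx]
        exact memD _ (by omega)
          (uu_special m h (2 * c - 1) hm2' hm2 (by omega) (by omega) hh hhe)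
      · subst hk
        have key : (2 ^ (2 * c + 1) - 1) * (2 ^ (2 * c - 1) + 2)
            = (7 * 2 ^ (2 * c - 1) - 1) + 1 * (2 ^ m - 1) := by
          have e1' : (2 ^ (2 * c + 1) - 1) * (2 ^ (2 * c - 1) + 2)
              = 2 ^ (2 * c + 1) * (2 ^ (2 * c - 1) + 2) - (2 ^ (2 * c - 1) + 2) := by
            rw [Nat.sub_mul, one_mul]
          have e2' : 2 ^ (2 * c + 1) * (2 ^ (2 * c - 1) + 2)
              = 4 * (2 ^ (2 * c - 1) * 2 ^ (2 * c - 1)) + 8 * 2 ^ (2 * c - 1) := by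
            rw [hA]; ring
          omega
        have hx : (2 ^ (2 * c + 1) - 1) * (2 ^ (2 * c - 1) + 2) % (2 ^ m - 1)
            = 7 * 2 ^ (2 * c - 1) - 1 := by
          rw [key, Nat.add_mul_mod_self_right, Nat.mod_eq_of_lt (by omega)]
        rw [hx]
        have h2c : (2:ℕ) ^ (2 * c) = 2 * 2 ^ (2 * c - 1) := by
          rw [show (2:ℕ) * 2 ^ (2 * c - 1) = 2 ^ 1 * 2 ^ (2 * c - 1) from by norm_num,
            ← pow_add]
          congr 1; omega
        have hsplit : 7 * 2 ^ (2 * c - 1) - 1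
            = 3 * 2 ^ (2 * c) + (2 ^ (2 * c - 1) - 1) := by omega
        have hw : wt2 (7 * 2 ^ (2 * c - 1) - 1) = 2 * c + 1 := by
          rw [hsplit, wt2_mul_pow_add 3 (2 * c) _ (by omega), wt2_three,
            wt2_pow_sub_one]
          omega
        exact memD _ (by omega)
          (uu_generic m _ h hm2' hm2 (by omega) (by omega)
            (by rw [hw]; omega) (by rw [hw]; omega) hh)
    · exact memD _ (Nat.mod_lt _ (by omega)) (hkey_high k hk1 hk2)
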